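/- Let Ω be a paracompact Hausdorff space, X a locally convex space with continuous seminorm p, X₀ a dense linear subspace of X, and f ∈ C(Ω, X). Then for every ε > 0 there exists g ∈ C(Ω, X₀) (a continuous function with values in X₀) such that sup_{t ∈ Ω} p(f(t) − g(t)) < ε. -/

import Mathlib

open Set Function

theorem stmt_14 {Ω X : Type*} [TopologicalSpace Ω] [ParacompactSpace Ω]
    [T2Space Ω] [AddCommGroup X] [Module ℝ X] [TopologicalSpace X]
    [IsTopologicalAddGroup X] [ContinuousSMul ℝ X] [LocallyConvexSpace ℝ X]
    (p : Seminorm ℝ X) (hp : Continuous p)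
    (X₀ : Submodule ℝ X) (hX₀ : Dense (X₀ : Set X))
    (f : Ω → X) (hf : Continuous f) :
    ∀ ε > (0 : ℝ), ∃ g : Ω → X, Continuous g ∧ (∀ t, g t ∈ X₀) ∧
      ∀ t : Ω, p (f t - g t) < ε := by
  intro ε hε
  have hε3 : (0 : ℝ) < ε / 3 := by linarith
  -- open cover
  set U : Ω → Set Ω := fun i => {t | p (f t - f i) < ε / 3} with hU
  have hUo : ∀ i, IsOpen (U i) := by
    intro i
    have : Continuous fun t => p (f t - f i) := hp.comp (hf.sub continuous_const)
    exact isOpen_lt this continuous_const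
  have hUc : (univ : Set Ω) ⊆ ⋃ i, U i := by
    intro t _
    exact mem_iUnion.2 ⟨t, by simp [U, hε3]⟩
  obtain ⟨ρ, hρ⟩ := PartitionOfUnity.exists_isSubordinate isClosed_univ U hUo hUc
  -- choose approximants in X₀
  have hy : ∀ i : Ω, ∃ y ∈ X₀, p (f i - y) < ε / 3 := by
    intro i
    have ho : IsOpen {x : X | p (f i - x) < ε / 3} := by
      have : Continuous fun x : X => p (f i - x) :=
        hp.comp (continuous_const.sub continuous_id)
      exact isOpen_lt this continuous_const
    obtain ⟨y, hy₀, hy⟩ := hX₀.exists_mem_open ho ⟨f i, by simp [hε3]⟩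
    exact ⟨y, hy₀, hy⟩
  choose y hy₀ hyp using hy
  refine ⟨fun t => ∑ᶠ i, ρ i t • y i, ?_, ?_, ?_⟩
  · exact hρ.continuous_finsum_smul hUo (fun i => continuousOn_const)
  · intro t
    show ∑ᶠ i, ρ i t • y i ∈ X₀
    rw [← ρ.sum_finsupport_smul_eq_finsum (fun i _ => y i)]
    exact Submodule.sum_mem _ fun i _ => X₀.smul_mem _ (hy₀ i)
  · intro t
    show p (f t - ∑ᶠ i, ρ i t • y i) < ε
    have hsum : ∑ i ∈ ρ.finsupport t, ρ i t = 1 := ρ.sum_finsupport (mem_univ t)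
    rw [← ρ.sum_finsupport_smul_eq_finsum (fun i _ => y i)]
    have key : f t - ∑ i ∈ ρ.finsupport t, ρ i t • y i
        = ∑ i ∈ ρ.finsupport t, ρ i t • (f t - y i) := by
      simp only [smul_sub, Finset.sum_sub_distrib, ← Finset.sum_smul, hsum, one_smul]
    rw [key]
    calc p (∑ i ∈ ρ.finsupport t, ρ i t • (f t - y i))
        ≤ ∑ i ∈ ρ.finsupport t, p (ρ i t • (f t - y i)) :=
          Finset.le_sum_of_subadditive p (map_zero p).le (map_add_le_add p) _ _
      _ ≤ ∑ i ∈ ρ.finsupport t, ρ i t * (2 * ε / 3) := by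
          apply Finset.sum_le_sum
          intro i hi
          rw [map_smul_eq_mul, Real.norm_eq_abs, abs_of_nonneg (ρ.nonneg i t)]
          apply mul_le_mul_of_nonneg_left _ (ρ.nonneg i t)
          have hti : t ∈ U i := hρ i (subset_tsupport _ ((ρ.mem_finsupport t).1 hi))
          have h1 : p (f t - f i) < ε / 3 := hti
          have h2 : p (f i - y i) < ε / 3 := hyp i
          calc p (f t - y i) ≤ p (f t - f i) + p (f i - y i) := by
                have := map_add_le_add p (f t - f i) (f i - y i)
                simpa using this
            _ ≤ 2 * ε / 3 := by linarith
      _ = 2 * ε / 3 := by rw [← Finset.sum_mul, hsum, one_mul]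
      _ < ε := by linarith
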